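/- Let G be a DAG. Suppose vertex r is a leaf with unique parent v, and suppose there exist X, Y and a set Z with v ∈ Z, X, Y ∉ Z ∪ {r}, such that X ⊥_d Y | Z. Then X ⊥_d Y | Z ∪ {r}. In contrast, if r were instead a vertex with at least two parents including ancestors of both X and Y via Z-avoiding directed paths, then X and Y would be d-connected given Z ∪ {r}. -/

import Mathlib

variable {V : Type*}

/-- Nontrivial directed reachability in a directed graph `G`. -/
def Reach (G : V → V → Prop) : V → V → Prop := Relation.TransGen G

/-- `G` is a directed acyclic graph. -/
def IsDAG (G : V → V → Prop) : Prop := ∀ v, ¬ Reach G v v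

/-- Adjacency in either direction. -/
def GAdj (G : V → V → Prop) (a b : V) : Prop := G a b ∨ G b a

/-- `p` is a path from `X` to `Y`: a sequence of distinct vertices in which
consecutive vertices are joined by an edge (in either direction). -/
structure IsPath (G : V → V → Prop) (p : List V) (X Y : V) : Prop where
  nodup : p.Nodup
  head : p.head? = some X
  last : p.getLast? = some Y
  chain : p.Chain' (GAdj G)

/-- `r` is a collider on the path `p` (both incident path edges point into `r`). -/
def IsColliderOn (G : V → V → Prop) (p : List V) (r : V) : Prop :=
  ∃ a b, [a, r, b] <:+: p ∧ G a r ∧ G b r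

/-- The path `p` is active (d-connecting) given the conditioning set `W`:
every interior collider is in `W` or has a descendant in `W`, and every
interior non-collider is outside `W`. -/
def ActiveGiven (G : V → V → Prop) (p : List V) (W : Set V) : Prop :=
  ∀ a v b, [a, v, b] <:+: p →
    ((G a v ∧ G b v) → (v ∈ W ∨ ∃ d, Reach G v d ∧ d ∈ W)) ∧
    (¬ (G a v ∧ G b v) → v ∉ W)

/-- `X` and `Y` are d-separated by `W`: every path between them is blocked. -/
def DSep (G : V → V → Prop) (X Y : V) (W : Set V) : Prop :=
  ∀ p, IsPath G p X Y → ¬ ActiveGiven G p W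

/-- A leaf: a vertex with no children (no outgoing edges). -/
def IsLeaf (G : V → V → Prop) (r : V) : Prop := ∀ w, ¬ G r w

/-- `v` is the unique parent of `r`. -/
def UniqueParent (G : V → V → Prop) (v r : V) : Prop :=
  G v r ∧ ∀ u, G u r → u = v

/-- A directed path from `X` to `r` whose interior vertices avoid `Z`. -/
def DirPathAvoid (G : V → V → Prop) (Z : Set V) (X r : V) : Prop :=
  ∃ p : List V, p.Chain' G ∧ p.head? = some X ∧ p.getLast? = some r ∧
    ∀ v ∈ p, v ≠ X → v ≠ r → v ∉ Z

/-- Stability of d-separation under conditioning on a weak self-masking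
indicator, together with the collider-detection criterion: a non-self-masking
indicator that is a common descendant via Z-avoiding directed paths opens a
dependence. -/


lemma reach_of_chain' {G : V → V → Prop} :
    ∀ {l : List V} {a b : V}, (a :: l).Chain' G → b ∈ l → Reach G a b := by
  intro l
  induction l with
  | nil => intro a b _ h; simp at h
  | cons c t ih =>
    intro a b hc hb
    rw [List.Chain', List.isChain_cons_cons] at hc
    rcases List.mem_cons.1 hb with rfl | hb
    · exact Relation.TransGen.single hc.1
    · exact Relation.TransGen.head hc.1 (ih hc.2 hb)

lemma nodup_of_chain' {G : V → V → Prop} (hdag : IsDAG G) :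
    ∀ {l : List V}, l.Chain' G → l.Nodup := by
  intro l
  induction l with
  | nil => simp
  | cons a t ih =>
    intro hc
    have ht : t.Chain' G := hc.tail
    refine List.nodup_cons.2 ⟨fun hmem => ?_, ih ht⟩
    exact hdag a (reach_of_chain' hc hmem)

lemma firstSplit {S : Set V} :
    ∀ {q : List V}, (∃ x ∈ q, x ∈ S) →
      ∃ l w m, q = l ++ w :: m ∧ w ∈ S ∧ ∀ u ∈ l, u ∉ S := by
  intro q
  induction q with
  | nil => rintro ⟨x, hx, _⟩; simp at hx
  | cons a t ih =>
    intro hex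
    by_cases ha : a ∈ S
    · exact ⟨[], a, t, by simp, ha, by simp⟩
    · have : ∃ x ∈ t, x ∈ S := by
        rcases hex with ⟨x, hx, hxS⟩
        rcases List.mem_cons.1 hx with rfl | hx
        · exact absurd hxS ha
        · exact ⟨x, hx, hxS⟩
      rcases ih this with ⟨l, w, m, heq, hw, hl⟩
      refine ⟨a :: l, w, m, by simp [heq], hw, ?_⟩
      intro u hu
      rcases List.mem_cons.1 hu with rfl | hu
      · exact ha
      · exact hl u hu

lemma split_unique {w : V} :
    ∀ {a c b d : List V}, a ++ w :: b = c ++ w :: d → w ∉ a → w ∉ c → a = c ∧ b = d := by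
  intro a
  induction a with
  | nil =>
    intro c b d heq _ hc
    cases c with
    | nil => simp_all
    | cons e c' =>
      simp only [List.nil_append, List.cons_append, List.cons.injEq] at heq
      exact absurd (heq.1 ▸ (List.mem_cons_self : e ∈ e :: c')) (by simp_all)
  | cons x a' ih =>
    intro c b d heq ha hc
    cases c with
    | nil =>
      simp only [List.nil_append, List.cons_append, List.cons.injEq] at heq
      cases heq.1
      exact absurd List.mem_cons_self ha
    | cons e c' =>
      simp only [List.cons_append, List.cons.injEq] at heq
      have := ih heq.2 (fun h => ha (List.mem_cons_of_mem _ h)) (fun h => hc (List.mem_cons_of_mem _ h))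
      exact ⟨by rw [heq.1, this.1], this.2⟩

lemma edge_of_chain' {G : V → V → Prop} {l s t : List V} {x y : V}
    (hc : l.Chain' G) (heq : l = s ++ x :: y :: t) : G x y := by
  have : [x, y] <:+: l := ⟨s, t, by simp [heq]⟩
  exact List.isChain_pair.1 (hc.infix (by simpa using this))

lemma not_head_of_interior {P s t : List V} {a u b X : V}
    (hnd : P.Nodup) (hh : P.head? = some X) (heq : P = s ++ a :: u :: b :: t) : u ≠ X := by
  subst heq
  have h1 : X ∈ s ++ [a] := by
    have : ((s ++ [a]) ++ u :: b :: t).head? = (s ++ [a]).head? :=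
      List.head?_append_of_ne_nil _ (by simp)
    simp only [List.append_assoc, List.singleton_append] at this
    rw [this] at hh
    exact List.mem_of_mem_head? (by simp [hh])
  have h2 : u ∉ s ++ [a] := by
    have : ((s ++ [a]) ++ u :: b :: t).Nodup := by simpa using hnd
    rcases List.nodup_append.1 this with ⟨_, _, hdisj⟩
    exact fun hu => hdisj _ hu _ List.mem_cons_self rfl
  exact fun h => h2 (h ▸ h1)

lemma not_last_of_interior {P s t : List V} {a u b Y : V}
    (hnd : P.Nodup) (hl : P.getLast? = some Y) (heq : P = s ++ a :: u :: b :: t) : u ≠ Y := by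
  subst heq
  have h1 : Y ∈ b :: t := by
    have heq2 : (s ++ a :: u :: b :: t).getLast? = (b :: t).getLast? := by
      rw [show s ++ a :: u :: b :: t = (s ++ [a, u]) ++ b :: t by simp]
      exact List.getLast?_append_cons _ _ _
    rw [heq2] at hl
    exact List.mem_of_mem_getLast? (by simp [hl])
  have h2 : u ∉ b :: t := by
    have : ((s ++ [a]) ++ u :: b :: t).Nodup := by simpa using hnd
    rcases List.nodup_append.1 this with ⟨_, hnd2, _⟩
    exact (List.nodup_cons.1 hnd2).1
  exact fun h => h2 (h ▸ h1)

lemma mem_last_suffix {q l m : List V} {x r : V}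
    (hl : q.getLast? = some r) (heq : q = l ++ x :: m) : r ∈ x :: m := by
  subst heq
  rw [List.getLast?_append_cons] at hl
  exact List.mem_of_mem_getLast? (by simp [hl])

lemma ne_last_of_mem_left {q l m : List V} {x r u : V} (hnd : q.Nodup)
    (hl : q.getLast? = some r) (heq : q = l ++ x :: m) (hu : u ∈ l) : u ≠ r := by
  have h1 : r ∈ x :: m := mem_last_suffix hl heq
  rcases List.nodup_append.1 (heq ▸ hnd) with ⟨_, _, hdisj⟩
  exact fun h => hdisj _ hu _ (h ▸ h1) rfl

lemma reach_last {G : V → V → Prop} {q l m : List V} {w r : V}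
    (hc : q.Chain' G) (hl : q.getLast? = some r) (heq : q = l ++ w :: m)
    (hne : w ≠ r) : Reach G w r := by
  have hcs : (w :: m).Chain' G := (List.isChain_split.1 (heq ▸ hc)).2
  have h1 : r ∈ w :: m := mem_last_suffix hl heq
  rcases List.mem_cons.1 h1 with h | h
  · exact absurd h.symm hne
  · exact reach_of_chain' hcs h

lemma reach_r_cases {G : V → V → Prop} {v r u : V}
    (hvr : G v r) (huniq : ∀ u, G u r → u = v) (h : Reach G u r) :
    u = v ∨ Reach G u v := by
  rcases Relation.TransGen.tail'_iff.1 h with ⟨b, hrt, hbr⟩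
  have hb : b = v := huniq _ hbr
  subst hb
  rcases Relation.reflTransGen_iff_eq_or_transGen.1 hrt with h1 | h1
  · exact Or.inl h1.symm
  · exact Or.inr h1


theorem selfmasking_stability_and_collider_detection (G : V → V → Prop)
    (hdag : IsDAG G) (r v : V) (hleaf : IsLeaf G r) (hpar : UniqueParent G v r)
    (X Y : V) (hXY : X ≠ Y) (Z : Set V) (hv : v ∈ Z)
    (hX : X ∉ Z ∪ {r}) (hY : Y ∉ Z ∪ {r})
    (hsep : DSep G X Y Z) :
    DSep G X Y (Z ∪ {r}) ∧
      ∀ r' : V, r' ∉ Z → r' ≠ X → r' ≠ Y →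
        (∃ a b, a ≠ b ∧ G a r' ∧ G b r') →
        DirPathAvoid G Z X r' → DirPathAvoid G Z Y r' →
        ¬ DSep G X Y (Z ∪ {r'}) := by
  constructor
  · -- Part 1: stability
    intro p hp hact
    -- r is not on p
    have hrp : r ∉ p := by
      intro hrmem
      rcases List.append_of_mem hrmem with ⟨s, t, heq⟩
      rcases s.eq_nil_or_concat with rfl | ⟨s', a, rfl⟩
      · -- r is the head, so X = r
        have : p.head? = some r := by simp [heq]
        rw [hp.head] at this
        exact hX (by simp [Option.some_inj.1 this])
      · cases t with
        | nil =>
          have : p.getLast? = some r := by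
            simp [heq, List.getLast?_concat]
          rw [hp.last] at this
          exact hY (by simp [Option.some_inj.1 this.symm])
        | cons b t' =>
          have heq' : p = s' ++ a :: r :: b :: t' := by simp [heq]
          have h1 : GAdj G a r := edge_of_chain' hp.chain heq'
          have h2 : GAdj G r b := edge_of_chain' hp.chain
            (show p = (s' ++ [a]) ++ r :: b :: t' by simp [heq'])
          have har : G a r := h1.resolve_right (hleaf a)
          have hbr : G b r := h2.resolve_left (hleaf b)
          have hav : a = v := hpar.2 a har
          have hbv : b = v := hpar.2 b hbr
          have hab : a ≠ b := by
            have : ((s' ++ [a]) ++ r :: b :: t').Nodup := by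
              simpa [heq'] using hp.nodup
            rcases List.nodup_append.1 this with ⟨h3, h4, hdisj⟩
            exact fun h => hdisj _ (show a ∈ s' ++ [a] by simp) _ (show a ∈ r :: b :: t' by simp [h]) rfl
          exact hab (hav.trans hbv.symm)
    -- p is active given Z, contradiction
    refine hsep p hp ?_
    intro a u b hinf
    obtain ⟨hcol, hncol⟩ := hact a u b hinf
    have hup : u ∈ p := hinf.mem (by simp)
    constructor
    · intro h
      rcases hcol h with hu | ⟨d, hreach, hd⟩
      · rcases hu with hu | hu
        · exact Or.inl hu
        · exact absurd (Set.mem_singleton_iff.1 hu ▸ hup) hrp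
      · rcases hd with hd | hd
        · exact Or.inr ⟨d, hreach, hd⟩
        · -- d = r, so reach u r; use unique parent
          rw [Set.mem_singleton_iff] at hd
          subst hd
          rcases reach_r_cases hpar.1 hpar.2 hreach with rfl | hr
          · exact Or.inl hv
          · exact Or.inr ⟨v, hr, hv⟩
    · intro h
      have := hncol h
      exact fun hu => this (Or.inl hu)
  · -- Part 2: collider detection
    intro r' hr'Z hr'X hr'Y _ hdX hdY hds
    rcases hdX with ⟨q1, hc1, hh1, hl1, hav1⟩
    rcases hdY with ⟨q2, hc2, hh2, hl2, hav2⟩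
    have hnd1 : q1.Nodup := nodup_of_chain' hdag hc1
    have hnd2 : q2.Nodup := nodup_of_chain' hdag hc2
    have hr'q2 : r' ∈ q2 := List.mem_of_mem_getLast? (by simp [hl2])
    have hr'q1 : r' ∈ q1 := List.mem_of_mem_getLast? (by simp [hl1])
    have hex : ∃ x ∈ q1, x ∈ {y | y ∈ q2} := ⟨r', hr'q1, hr'q2⟩
    rcases firstSplit hex with ⟨l1, w, m1, heq1, hwq2, hl1q2⟩
    have hwq2' : w ∈ q2 := hwq2
    rcases List.append_of_mem hwq2' with ⟨l2, m2, heq2⟩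
    set P := l1 ++ w :: l2.reverse with hP
    have h1 := List.nodup_append.1 (heq1 ▸ hnd1)
    have h2 := List.nodup_append.1 (heq2 ▸ hnd2)
    have hwl1 : w ∉ l1 := fun h => h1.2.2 _ h _ List.mem_cons_self rfl
    have hwl2 : w ∉ l2 := fun h => h2.2.2 _ h _ List.mem_cons_self rfl
    have hndP : P.Nodup := by
      rw [hP, List.nodup_append]
      refine ⟨h1.1, List.nodup_cons.2 ⟨by simpa using hwl2, by simpa using h2.1⟩, ?_⟩
      intro u hu _ hmem rfl
      have huq2 : u ∉ q2 := hl1q2 u hu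
      rcases List.mem_cons.1 hmem with rfl | hmem
      · exact huq2 hwq2'
      · exact huq2 (heq2 ▸ List.mem_append_left _ (List.mem_reverse.1 hmem))
    have hheadP : P.head? = some X := by
      have : P.head? = q1.head? := by rw [hP, heq1]; cases l1 <;> simp
      rw [this, hh1]
    have hlastP : P.getLast? = some Y := by
      have : P.getLast? = q2.head? := by
        rw [hP, heq2]
        cases l2 with
        | nil => simp [List.getLast?_concat]
        | cons c l2' =>
          rw [show (c :: l2').reverse = l2'.reverse ++ [c] by simp,
            show l1 ++ w :: (l2'.reverse ++ [c]) = (l1 ++ w :: l2'.reverse) ++ [c] by simp,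
            List.getLast?_concat]
          simp
      rw [this, hh2]
    have hcp1 : (l1 ++ [w]).Chain' G := (List.isChain_split.1 (heq1 ▸ hc1)).1
    have hcp2 : (l2 ++ [w]).Chain' G := (List.isChain_split.1 (heq2 ▸ hc2)).1
    have hchP : P.Chain' (GAdj G) := by
      rw [hP, List.Chain', List.isChain_split]
      constructor
      · exact hcp1.imp (fun a b h => Or.inl h)
      · have : ((l2 ++ [w]).reverse).Chain' (GAdj G) :=
          List.isChain_reverse.2 (hcp2.imp (fun a b h => Or.inr h))
        simpa [List.Chain'] using this
    have hisP : IsPath G P X Y := ⟨hndP, hheadP, hlastP, hchP⟩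
    refine hds P hisP ?_
    intro a u b hinf
    rcases hinf with ⟨s, t, hPe⟩
    have hPeq : P = s ++ a :: u :: b :: t := by
      rw [← hPe]; simp
    have huP : u ∈ P := by rw [hPeq]; simp
    have husa : u ∉ s ++ [a] := by
      have : ((s ++ [a]) ++ u :: b :: t).Nodup := by
        rw [show (s ++ [a]) ++ u :: b :: t = s ++ a :: u :: b :: t by simp, ← hPeq]
        exact hndP
      exact fun h => (List.nodup_append.1 this).2.2 _ h _ List.mem_cons_self rfl
    rcases List.mem_append.1 (hP ▸ huP) with hul1 | humid
    · -- u is in l1 : a directed non-collider, outside Z ∪ {r'}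
      rcases List.append_of_mem hul1 with ⟨s1, t1, hl1e⟩
      have hus1 : u ∉ s1 := by
        have : (s1 ++ u :: (t1 ++ w :: l2.reverse)).Nodup := by
          rw [show s1 ++ u :: (t1 ++ w :: l2.reverse) = (s1 ++ u :: t1) ++ w :: l2.reverse
            by simp, ← hl1e]
          exact hndP
        exact fun h => (List.nodup_append.1 this).2.2 _ h _ List.mem_cons_self rfl
      have hsplit : s ++ [a] = s1 ∧ b :: t = t1 ++ w :: l2.reverse := by
        apply split_unique _ husa hus1
        rw [show (s ++ [a]) ++ u :: b :: t = s ++ a :: u :: b :: t by simp, ← hPeq, hP,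
          hl1e]
        simp
      have hGub : G u b := by
        cases t1 with
        | nil =>
          have hbw : b = w := by
            have := hsplit.2
            simp at this
            exact this.1
          have : G u w := edge_of_chain' hc1
            (show q1 = s1 ++ u :: w :: m1 by rw [heq1, hl1e]; simp)
          rwa [← hbw] at this
        | cons c t1' =>
          have hbc : b = c := by
            have := hsplit.2
            simp at this
            exact this.1
          have : G u c := edge_of_chain' hc1
            (show q1 = s1 ++ u :: c :: (t1' ++ w :: m1) by rw [heq1, hl1e]; simp)
          rwa [← hbc] at this
      have hnGbu : ¬ G b u := fun h =>
        hdag u (Relation.TransGen.head hGub (Relation.TransGen.single h))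
      have huq1 : u ∈ q1 := heq1 ▸ List.mem_append_left _ hul1
      have huX : u ≠ X := not_head_of_interior hndP hheadP hPeq
      have hur' : u ≠ r' := ne_last_of_mem_left hnd1 hl1 heq1 hul1
      have huZ : u ∉ Z := hav1 u huq1 huX hur'
      constructor
      · intro h; exact absurd h.2 hnGbu
      · intro _ hu
        rcases hu with hu | hu
        · exact huZ hu
        · exact hur' hu
    · rcases List.mem_cons.1 humid with rfl | hul2r
      · -- u = w : the collider with descendant r'
        have hsplit : s ++ [a] = l1 ∧ b :: t = l2.reverse := by
          apply split_unique _ husa hwl1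
          rw [show (s ++ [a]) ++ u :: b :: t = s ++ a :: u :: b :: t by simp, ← hPeq, hP]
        have hGaw : G a u :=
          edge_of_chain' hc1
            (show q1 = s ++ a :: u :: m1 by rw [heq1, ← hsplit.1]; simp)
        have hGbw : G b u := by
          have hl2e : l2 = t.reverse ++ [b] := by
            rw [show t.reverse ++ [b] = (b :: t).reverse by simp, hsplit.2]
            simp
          exact edge_of_chain' hc2
            (show q2 = t.reverse ++ b :: u :: m2 by rw [heq2, hl2e]; simp)
        constructor
        · intro _
          by_cases hwr : u = r'
          · exact Or.inl (Or.inr (by simp [hwr]))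
          · exact Or.inr ⟨r', reach_last hc2 hl2 heq2 hwr, Or.inr rfl⟩
        · intro hn; exact absurd ⟨hGaw, hGbw⟩ hn
      · -- u ∈ l2.reverse : a directed non-collider (pointing toward u's parentward)
        have hul2 : u ∈ l2 := List.mem_reverse.1 hul2r
        rcases List.append_of_mem hul2 with ⟨s2, t2, hl2e⟩
        have hul2pre : u ∉ l1 ++ w :: t2.reverse := by
          have : ((l1 ++ w :: t2.reverse) ++ u :: s2.reverse).Nodup := by
            rw [show (l1 ++ w :: t2.reverse) ++ u :: s2.reverse
              = l1 ++ w :: (t2.reverse ++ u :: s2.reverse) by simp,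
              show t2.reverse ++ u :: s2.reverse = (s2 ++ u :: t2).reverse by simp,
              ← hl2e]
            exact hndP
          exact fun h => (List.nodup_append.1 this).2.2 _ h _ List.mem_cons_self rfl
        have hsplit : s ++ [a] = l1 ++ w :: t2.reverse ∧ b :: t = s2.reverse := by
          apply split_unique _ husa hul2pre
          rw [show (s ++ [a]) ++ u :: b :: t = s ++ a :: u :: b :: t by simp, ← hPeq, hP,
            hl2e]
          simp
        have hGua : G u a := by
          cases t2 with
          | nil =>
            have haw : a = w := by
              have := congrArg List.getLast? hsplit.1
              rw [List.getLast?_concat] at this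
              simp at this
              exact this
            have : G u w := edge_of_chain' hc2
              (show q2 = s2 ++ u :: w :: m2 by rw [heq2, hl2e]; simp)
            rwa [← haw] at this
          | cons c t2' =>
            have hac : a = c := by
              have := congrArg List.getLast? hsplit.1
              rw [List.getLast?_concat,
                show l1 ++ w :: (c :: t2').reverse = (l1 ++ w :: t2'.reverse) ++ [c]
                  by simp, List.getLast?_concat] at this
              simp at this
              exact this
            have : G u c := edge_of_chain' hc2
              (show q2 = s2 ++ u :: c :: (t2' ++ w :: m2) by rw [heq2, hl2e]; simp)
            rwa [← hac] at this
        have hnGau : ¬ G a u := fun h =>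
          hdag u (Relation.TransGen.head hGua (Relation.TransGen.single h))
        have huq2 : u ∈ q2 := heq2 ▸ List.mem_append_left _ hul2
        have huY : u ≠ Y := not_last_of_interior hndP hlastP hPeq
        have hur' : u ≠ r' := ne_last_of_mem_left hnd2 hl2 heq2 hul2
        have huZ : u ∉ Z := hav2 u huq2 huY hur'
        constructor
        · intro h; exact absurd h.1 hnGau
        · intro _ hu
          rcases hu with hu | hu
          · exact huZ hu
          · exact hur' hu
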